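/- arXiv:1502.01796 — 2 statements merged into one kernel-verified Lean document; each statement's English description precedes it below -/
import Mathlib

section
/- Let n ∈ ℤ⁺ and ε, b > 0, and χₙ(x;ε,b) = xⁿχ(x;ε,b). Then there is a constant c = c(n,b) such that for all x ≥ 0, (χₙ'''(x;ε,b))² ≤ c·(1 + χₙ(x;ε,b))·χₙ'(x;ε,b) wherever χₙ'(x;ε,b) > 0, and more precisely |(χₙ''')²/χₙ'| ≤ c(1+χₙ) on (ε, ∞). -/
open MeasureTheory intervalIntegral Set

noncomputable def Pc (t : ℝ) : ℝ :=
  462*t^6 - 1980*t^7 + 3465*t^8 - 3080*t^9 + 1386*t^10 - 252*t^11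
noncomputable def Pd1 (t : ℝ) : ℝ := 2772*t^5*(1-t)^5
noncomputable def Pd2 (t : ℝ) : ℝ := 13860*t^4*(1-t)^4*(1-2*t)
noncomputable def Pd3 (t : ℝ) : ℝ := 2772*t^3*(1-t)^3*(20-90*t+90*t^2)

lemma hasDerivAt_Pc (t : ℝ) : HasDerivAt Pc (Pd1 t) t := by
  have h : HasDerivAt (fun t : ℝ => 462*t^6 - 1980*t^7 + 3465*t^8 - 3080*t^9 + 1386*t^10 - 252*t^11)
      (462*(↑(6:ℕ)*t^5) - 1980*(↑(7:ℕ)*t^6) + 3465*(↑(8:ℕ)*t^7) - 3080*(↑(9:ℕ)*t^8)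
        + 1386*(↑(10:ℕ)*t^9) - 252*(↑(11:ℕ)*t^10)) t := by
    exact ((((((hasDerivAt_pow 6 t).const_mul 462).sub ((hasDerivAt_pow 7 t).const_mul 1980)).add
      ((hasDerivAt_pow 8 t).const_mul 3465)).sub ((hasDerivAt_pow 9 t).const_mul 3080)).add
      ((hasDerivAt_pow 10 t).const_mul 1386)).sub ((hasDerivAt_pow 11 t).const_mul 252)
  refine h.congr_deriv ?_
  simp [Pd1]; ring

lemma hasDerivAt_Pd1 (t : ℝ) : HasDerivAt Pd1 (Pd2 t) t := by
  have h1 : HasDerivAt (fun t : ℝ => 2772*t^5) (2772*(↑(5:ℕ)*t^4)) t :=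
    (hasDerivAt_pow 5 t).const_mul 2772
  have h2 : HasDerivAt (fun t : ℝ => (1-t)^5) (↑(5:ℕ)*(1-t)^4*(-1)) t := by
    exact (((hasDerivAt_id t).const_sub 1).pow 5).congr_deriv (by norm_num [id])
  have h := h1.mul h2
  refine h.congr_deriv ?_
  simp [Pd2]; ring

lemma hasDerivAt_Pd2 (t : ℝ) : HasDerivAt Pd2 (Pd3 t) t := by
  have h1 : HasDerivAt (fun t : ℝ => 13860*t^4) (13860*(↑(4:ℕ)*t^3)) t :=
    (hasDerivAt_pow 4 t).const_mul 13860
  have h2 : HasDerivAt (fun t : ℝ => (1-t)^4) (↑(4:ℕ)*(1-t)^3*(-1)) t := by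
    exact (((hasDerivAt_id t).const_sub 1).pow 4).congr_deriv (by norm_num [id])
  have h3 : HasDerivAt (fun t : ℝ => 1-2*t) (-2 : ℝ) t := by
    simpa using ((hasDerivAt_id t).const_mul 2).const_sub 1
  have h := (h1.mul h2).mul h3
  refine h.congr_deriv ?_
  simp [Pd3]; ring

lemma Pc_integral (t : ℝ) : Pc t = 2772 * ∫ y in (0:ℝ)..t, y ^ 5 * (1 - y) ^ 5 := by
  have key : ∫ y in (0:ℝ)..t, y ^ 5 * (1 - y) ^ 5 = Pc t / 2772 - Pc 0 / 2772 := by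
    apply integral_eq_sub_of_hasDerivAt (f := fun y => Pc y / 2772)
    · intro y _
      have := (hasDerivAt_Pc y).div_const 2772
      refine this.congr_deriv ?_
      simp [Pd1]; ring
    · apply Continuous.intervalIntegrable; continuity
  rw [key]; simp [Pc]; ring

lemma Pc_nonneg {t : ℝ} (h0 : 0 ≤ t) (h1 : t ≤ 1) : 0 ≤ Pc t := by
  rw [Pc_integral]
  have h : 0 ≤ ∫ y in (0:ℝ)..t, y ^ 5 * (1 - y) ^ 5 := by
    apply intervalIntegral.integral_nonneg h0
    intro y hy
    have hy1 : 0 ≤ y := hy.1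
    have hy2 : (0:ℝ) ≤ 1 - y := by have := hy.2; linarith
    positivity
  linarith

lemma Pc_pos {t : ℝ} (h0 : 0 < t) (h1 : t ≤ 1) : 0 < Pc t := by
  rw [Pc_integral]
  have h : 0 < ∫ y in (0:ℝ)..t, y ^ 5 * (1 - y) ^ 5 := by
    apply intervalIntegral_pos_of_pos_on
    · apply Continuous.intervalIntegrable; continuity
    · intro y hy
      have hy1 : (0:ℝ) < y := hy.1
      have hy2 : (0:ℝ) < 1 - y := by have := hy.2; linarith
      positivity
    · exact h0
  linarith

lemma Pc_le_one {t : ℝ} (h0 : 0 ≤ t) (h1 : t ≤ 1) : Pc t ≤ 1 := by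
  have hsplit : (∫ y in (0:ℝ)..t, y ^ 5 * (1 - y) ^ 5) + ∫ y in t..(1:ℝ), y ^ 5 * (1 - y) ^ 5
      = ∫ y in (0:ℝ)..(1:ℝ), y ^ 5 * (1 - y) ^ 5 := by
    apply integral_add_adjacent_intervals <;>
      · apply Continuous.intervalIntegrable; continuity
  have h2 : 0 ≤ ∫ y in t..(1:ℝ), y ^ 5 * (1 - y) ^ 5 := by
    apply intervalIntegral.integral_nonneg h1
    intro y hy
    have hy1 : 0 ≤ y := le_trans h0 hy.1
    have hy2 : (0:ℝ) ≤ 1 - y := by have := hy.2; linarith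
    positivity
  have hone : Pc 1 = 1 := by norm_num [Pc]
  have e1 := Pc_integral t
  have e2 := Pc_integral 1
  rw [hone] at e2
  rw [e1]
  nlinarith [hsplit, h2]

lemma Pd1_nonneg {t : ℝ} (h0 : 0 ≤ t) (h1 : t ≤ 1) : 0 ≤ Pd1 t := by
  have : (0:ℝ) ≤ 1 - t := by linarith
  unfold Pd1; positivity

lemma Pd1_le {t : ℝ} (h0 : 0 ≤ t) (h1 : t ≤ 1) : Pd1 t ≤ 2772 := by
  have h2 : (0:ℝ) ≤ 1 - t := by linarith
  have ht5 : t^5 ≤ 1 := pow_le_one₀ h0 h1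
  have hs5 : (1-t)^5 ≤ 1 := pow_le_one₀ h2 (by linarith)
  unfold Pd1
  nlinarith [pow_nonneg h0 5, pow_nonneg h2 5]

lemma Pd2_sq {t : ℝ} (h0 : 0 ≤ t) (h1 : t ≤ 1) : (Pd2 t)^2 ≤ 69300 * Pd1 t := by
  have h2 : (0:ℝ) ≤ 1 - t := by linarith
  have key : (Pd2 t)^2 = Pd1 t * (69300 * (t^3 * (1-t)^3 * (1-2*t)^2)) := by
    unfold Pd1 Pd2; ring
  have e1 : t^3 ≤ 1 := pow_le_one₀ h0 h1
  have e2 : (1-t)^3 ≤ 1 := pow_le_one₀ h2 (by linarith)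
  have e3 : (1-2*t)^2 ≤ 1 := by nlinarith
  have p2 : (0:ℝ) ≤ (1-t)^3 := by positivity
  have p3 : (0:ℝ) ≤ (1-2*t)^2 := by positivity
  have e12 : t^3 * (1-t)^3 ≤ 1 := mul_le_one₀ e1 p2 e2
  have hb1 : t^3 * (1-t)^3 * (1-2*t)^2 ≤ 1 := mul_le_one₀ e12 p3 e3
  have hP1 : 0 ≤ Pd1 t := Pd1_nonneg h0 h1
  calc (Pd2 t)^2 = Pd1 t * (69300 * (t^3 * (1-t)^3 * (1-2*t)^2)) := key
    _ ≤ Pd1 t * (69300 * 1) := by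
        apply mul_le_mul_of_nonneg_left _ hP1
        linarith
    _ = 69300 * Pd1 t := by ring

lemma Pd3_sq {t : ℝ} (h0 : 0 ≤ t) (h1 : t ≤ 1) : (Pd3 t)^2 ≤ 277200 * Pd1 t := by
  have h2 : (0:ℝ) ≤ 1 - t := by linarith
  have key : (Pd3 t)^2 = Pd1 t * (2772 * (t * (1-t) * (20-90*t+90*t^2)^2)) := by
    unfold Pd1 Pd3; ring
  have hq1 : 20-90*t+90*t^2 ≤ 20 := by nlinarith [mul_nonneg h0 h2]
  have hq2 : -20 ≤ 20-90*t+90*t^2 := by nlinarith [sq_nonneg (1-2*t)]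
  have hq : (20-90*t+90*t^2)^2 ≤ 400 := by nlinarith
  have ht : t * (1-t) ≤ 1/4 := by nlinarith [sq_nonneg (1-2*t)]
  have p3 : (0:ℝ) ≤ (20-90*t+90*t^2)^2 := by positivity
  have hb1 : t * (1-t) * (20-90*t+90*t^2)^2 ≤ 100 := by
    nlinarith [mul_nonneg (mul_nonneg h0 h2) p3, mul_nonneg h0 h2]
  have hP1 : 0 ≤ Pd1 t := Pd1_nonneg h0 h1
  calc (Pd3 t)^2 = Pd1 t * (2772 * (t * (1-t) * (20-90*t+90*t^2)^2)) := key
    _ ≤ Pd1 t * (2772 * 100) := by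
        apply mul_le_mul_of_nonneg_left _ hP1
        linarith
    _ = 277200 * Pd1 t := by ring

lemma glue_hasDerivAt {a ε : ℝ} (hεa : ε < a) {f fl fr dl dr : ℝ → ℝ}
    (hl : ∀ x, HasDerivAt fl (dl x) x) (hr : ∀ x, HasDerivAt fr (dr x) x)
    (heql : ∀ x ∈ Ioc ε a, f x = fl x) (heqr : ∀ x ∈ Ici a, f x = fr x)
    (hda : dl a = dr a) :
    ∀ x ∈ Ioi ε, HasDerivAt f (if x ≤ a then dl x else dr x) x := by
  intro x hx
  rcases lt_trichotomy x a with hxa | rfl | hxa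
  · rw [if_pos hxa.le]
    apply (hl x).congr_of_eventuallyEq
    filter_upwards [isOpen_Ioo.mem_nhds (⟨hx, hxa⟩ : x ∈ Ioo ε a)] with y hy
    exact heql y ⟨hy.1, hy.2.le⟩
  · rw [if_pos le_rfl]
    have h1 : HasDerivWithinAt f (dl x) (Iic x) x := by
      apply ((hl x).hasDerivWithinAt).congr_of_eventuallyEq
      · filter_upwards [Ioc_mem_nhdsLE_of_mem (⟨hεa, le_rfl⟩ : x ∈ Ioc ε x)] with y hy
        exact heql y hy
      · exact heql x ⟨hεa, le_rfl⟩
    have h2 : HasDerivWithinAt f (dl x) (Ici x) x := by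
      rw [hda]
      exact ((hr x).hasDerivWithinAt).congr (fun y hy => heqr y hy) (heqr x self_mem_Ici)
    have h3 := h1.union h2
    rw [Iic_union_Ici] at h3
    exact hasDerivWithinAt_univ.mp h3
  · rw [if_neg (not_le.mpr hxa)]
    apply (hr x).congr_of_eventuallyEq
    filter_upwards [isOpen_Ioi.mem_nhds hxa] with y hy
    exact heqr y (mem_Ioi.mp hy).le

set_option maxHeartbeats 1000000 in
lemma key_ineq (N c1 c2 u v w z q p r2 r3 m M S biv : ℝ)
    (hN : 1 ≤ N) (hc10 : 0 ≤ c1) (hc1N : c1 ≤ N) (hc20 : 0 ≤ c2) (hc2N : c2 ≤ N)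
    (hu0 : 0 ≤ u) (hu : u ≤ M) (hv0 : 0 ≤ v) (hv : v ≤ M) (hw0 : 0 ≤ w) (hw : w ≤ M)
    (hz0 : 0 ≤ z) (hz : z ≤ M) (hM0 : 0 ≤ M)
    (hq0 : 0 ≤ q) (hq1 : q ≤ 1) (hp0 : 0 ≤ p) (hp1 : p ≤ 2772)
    (hr2 : r2^2 ≤ 69300 * p) (hr3 : r3^2 ≤ 277200 * p)
    (hm : 0 < m) (hbiv : 0 < biv)
    (hS1 : m * q ≤ S) (hS2 : m * (p * biv) ≤ S) :
    (N*(c1*(c2*u))*q + 3*(N*(c1*v))*(p*biv) + 3*(N*w)*(r2*biv*biv) + z*(r3*biv*biv*biv))^2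
      ≤ (4*(N^6*M^2/m + 9*N^4*M^2*2772*biv/m + 9*N^2*M^2*69300*biv^3/m
          + M^2*277200*biv^5/m)) * S := by
  have hm' : m ≠ 0 := ne_of_gt hm
  set A := N*(c1*(c2*u))*q with hA_def
  set B := 3*(N*(c1*v))*(p*biv) with hB_def
  set C := 3*(N*w)*(r2*biv*biv) with hC_def
  set D := z*(r3*biv*biv*biv) with hD_def
  have hA : A^2 ≤ (N^6*M^2/m) * S := by
    have step1 : A^2 ≤ N^6*M^2*q := by
      calc A^2 = (N*(c1*(c2*u)))^2 * (q*q) := by rw [hA_def]; ring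
        _ ≤ (N*(N*(N*M)))^2 * (q*1) := by gcongr
        _ = N^6*M^2*q := by ring
    calc A^2 ≤ N^6*M^2*q := step1
      _ = (N^6*M^2/m) * (m*q) := by field_simp
      _ ≤ (N^6*M^2/m) * S := by
          apply mul_le_mul_of_nonneg_left hS1
          positivity
  have hB : B^2 ≤ (9*N^4*M^2*2772*biv/m) * S := by
    have step1 : B^2 ≤ 9*N^4*M^2*2772*(p*biv^2) := by
      calc B^2 = 9*(N*(c1*v))^2 * ((p*p)*biv^2) := by rw [hB_def]; ring
        _ ≤ 9*(N*(N*M))^2 * ((2772*p)*biv^2) := by gcongr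
        _ = 9*N^4*M^2*2772*(p*biv^2) := by ring
    calc B^2 ≤ 9*N^4*M^2*2772*(p*biv^2) := step1
      _ = (9*N^4*M^2*2772*biv/m) * (m*(p*biv)) := by field_simp
      _ ≤ (9*N^4*M^2*2772*biv/m) * S := by
          apply mul_le_mul_of_nonneg_left hS2
          positivity
  have hC : C^2 ≤ (9*N^2*M^2*69300*biv^3/m) * S := by
    have step1 : C^2 ≤ 9*N^2*M^2*69300*(p*biv^4) := by
      calc C^2 = 9*(N*w)^2 * (r2^2*biv^4) := by rw [hC_def]; ring
        _ ≤ 9*(N*M)^2 * ((69300*p)*biv^4) := by gcongr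
        _ = 9*N^2*M^2*69300*(p*biv^4) := by ring
    calc C^2 ≤ 9*N^2*M^2*69300*(p*biv^4) := step1
      _ = (9*N^2*M^2*69300*biv^3/m) * (m*(p*biv)) := by field_simp
      _ ≤ (9*N^2*M^2*69300*biv^3/m) * S := by
          apply mul_le_mul_of_nonneg_left hS2
          positivity
  have hD : D^2 ≤ (M^2*277200*biv^5/m) * S := by
    have step1 : D^2 ≤ M^2*277200*(p*biv^6) := by
      calc D^2 = z^2 * (r3^2*biv^6) := by rw [hD_def]; ring
        _ ≤ M^2 * ((277200*p)*biv^6) := by gcongr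
        _ = M^2*277200*(p*biv^6) := by ring
    calc D^2 ≤ M^2*277200*(p*biv^6) := step1
      _ = (M^2*277200*biv^5/m) * (m*(p*biv)) := by field_simp
      _ ≤ (M^2*277200*biv^5/m) * S := by
          apply mul_le_mul_of_nonneg_left hS2
          positivity
  nlinarith [sq_nonneg (A-B), sq_nonneg (A-C), sq_nonneg (A-D), sq_nonneg (B-C),
    sq_nonneg (B-D), sq_nonneg (C-D), hA, hB, hC, hD]

lemma region2 (n : ℕ) (hn : 1 ≤ n) (a : ℝ) (ha : 0 < a) :
    ∃ c : ℝ, 0 ≤ c ∧ ∀ x : ℝ, a ≤ x →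
      ((n:ℝ)*(((n-1:ℕ):ℝ)*(((n-1-1:ℕ):ℝ)*x^(n-1-1-1))))^2
        ≤ c * (1+x^n) * ((n:ℝ)*x^(n-1)) := by
  classical
  have hN : (1:ℝ) ≤ (n:ℝ) := by exact_mod_cast hn
  have hc10 : (0:ℝ) ≤ ((n-1:ℕ):ℝ) := Nat.cast_nonneg _
  have hc20 : (0:ℝ) ≤ ((n-1-1:ℕ):ℝ) := Nat.cast_nonneg _
  have hc1N : ((n-1:ℕ):ℝ) ≤ (n:ℝ) := by exact_mod_cast Nat.sub_le n 1
  have hc2N : ((n-1-1:ℕ):ℝ) ≤ (n:ℝ) := by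
    exact_mod_cast le_trans (Nat.sub_le _ _) (Nat.sub_le n 1)
  set N : ℝ := (n:ℝ) with hN_def
  set c1 : ℝ := ((n-1:ℕ):ℝ) with hc1_def
  set c2 : ℝ := ((n-1-1:ℕ):ℝ) with hc2_def
  set m₂ : ℝ := min 1 a ^ n with hm2_def
  have hmin0 : (0:ℝ) < min 1 a := lt_min one_pos ha
  have hmin1 : min 1 a ≤ 1 := min_le_left _ _
  have hm2 : 0 < m₂ := pow_pos hmin0 n
  have hN0 : (0:ℝ) ≤ N := by linarith
  have hN6 : (0:ℝ) ≤ N^6 := by positivity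
  refine ⟨N^6*(1+1/m₂), by positivity, ?_⟩
  intro x hax
  have h0x : 0 < x := lt_of_lt_of_le ha hax
  set u : ℝ := x^(n-1-1-1) with hu_def
  set w : ℝ := x^(n-1) with hw_def
  set z : ℝ := x^n with hz_def
  have hu0 : 0 ≤ u := by positivity
  have hw0 : 0 ≤ w := by positivity
  have hz0 : 0 ≤ z := by positivity
  rcases le_or_gt 1 x with h1x | h1x
  · have huw : u ≤ w := pow_le_pow_right₀ h1x (by omega)
    have huz : u ≤ z := pow_le_pow_right₀ h1x (by omega)
    have hN67 : N^6 ≤ (1+1/m₂)*N^7 := by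
      have h1 : N^6 ≤ N^7 := pow_le_pow_right₀ hN (by norm_num)
      have h2 : (1+1/m₂)*N^7 = N^7 + (1/m₂)*N^7 := by ring
      have h3 : (0:ℝ) ≤ (1/m₂)*N^7 := by positivity
      linarith
    calc (N*(c1*(c2*u)))^2 = (N*c1*c2)^2*(u*u) := by ring
      _ ≤ (N*N*N)^2*(w*z) := by gcongr
      _ = N^6*(w*z) := by ring
      _ ≤ N^6*(w*(1+z)) := by
          apply mul_le_mul_of_nonneg_left _ hN6
          apply mul_le_mul_of_nonneg_left _ hw0
          linarith
      _ ≤ ((1+1/m₂)*N^7)*(w*(1+z)) := by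
          apply mul_le_mul_of_nonneg_right hN67 (by positivity)
      _ = N^6*(1+1/m₂) * (1+z) * (N*w) := by ring
  · have hu1 : u ≤ 1 := pow_le_one₀ h0x.le h1x.le
    have hm2w : m₂ ≤ w := by
      calc m₂ = min 1 a ^ n := hm2_def
        _ ≤ min 1 a ^ (n-1) := pow_le_pow_of_le_one hmin0.le hmin1 (Nat.sub_le n 1)
        _ ≤ x ^ (n-1) := pow_le_pow_left₀ hmin0.le (le_trans (min_le_right _ _) hax) _
    calc (N*(c1*(c2*u)))^2 = (N*c1*c2)^2*(u*u) := by ring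
      _ ≤ (N*N*N)^2*(1*1) := by gcongr
      _ = N^6 := by ring
      _ ≤ (N^6*(1+1/m₂))*(1*m₂) := by
          have key : (N^6*(1+1/m₂))*(1*m₂) = N^6*m₂ + N^6 := by field_simp
          have h3 : (0:ℝ) ≤ N^6*m₂ := by positivity
          linarith
      _ ≤ (N^6*(1+1/m₂))*((1+z)*(N*w)) := by
          apply mul_le_mul_of_nonneg_left _ (by positivity)
          apply mul_le_mul
          · linarith
          · calc m₂ ≤ w := hm2w
              _ = 1*w := (one_mul w).symm
              _ ≤ N*w := by gcongr
          · exact hm2.le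
          · linarith
      _ = N^6*(1+1/m₂) * (1+z) * (N*w) := by ring

section Gdefs
variable (n : ℕ) (ε b : ℝ)

noncomputable def G0 (x : ℝ) : ℝ := x^n * Pc ((x-ε)/b)
noncomputable def G1 (x : ℝ) : ℝ :=
  (n:ℝ) * x^(n-1) * Pc ((x-ε)/b) + x^n * (Pd1 ((x-ε)/b) * (1/b))
noncomputable def G2 (x : ℝ) : ℝ :=
  (n:ℝ) * (((n-1:ℕ):ℝ) * x^(n-1-1)) * Pc ((x-ε)/b)
    + 2 * ((n:ℝ) * x^(n-1)) * (Pd1 ((x-ε)/b) * (1/b))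
    + x^n * (Pd2 ((x-ε)/b) * (1/b) * (1/b))
noncomputable def G3 (x : ℝ) : ℝ :=
  (n:ℝ) * (((n-1:ℕ):ℝ) * (((n-1-1:ℕ):ℝ) * x^(n-1-1-1))) * Pc ((x-ε)/b)
    + 3 * ((n:ℝ) * (((n-1:ℕ):ℝ) * x^(n-1-1))) * (Pd1 ((x-ε)/b) * (1/b))
    + 3 * ((n:ℝ) * x^(n-1)) * (Pd2 ((x-ε)/b) * (1/b) * (1/b))
    + x^n * (Pd3 ((x-ε)/b) * (1/b) * (1/b) * (1/b))
noncomputable def H0 (x : ℝ) : ℝ := x^n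
noncomputable def H1 (x : ℝ) : ℝ := (n:ℝ) * x^(n-1)
noncomputable def H2 (x : ℝ) : ℝ := (n:ℝ) * (((n-1:ℕ):ℝ) * x^(n-1-1))
noncomputable def H3 (x : ℝ) : ℝ :=
  (n:ℝ) * (((n-1:ℕ):ℝ) * (((n-1-1:ℕ):ℝ) * x^(n-1-1-1)))
noncomputable def D1 (x : ℝ) : ℝ := if x ≤ b + ε then G1 n ε b x else H1 n x
noncomputable def D2 (x : ℝ) : ℝ := if x ≤ b + ε then G2 n ε b x else H2 n x
noncomputable def D3 (x : ℝ) : ℝ := if x ≤ b + ε then G3 n ε b x else H3 n x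

lemma hasDerivAt_G0 (x : ℝ) : HasDerivAt (G0 n ε b) (G1 n ε b x) x := by
  have hin : HasDerivAt (fun y : ℝ => (y - ε)/b) (1/b) x :=
    ((hasDerivAt_id x).sub_const ε).div_const b
  have hPC : HasDerivAt (fun y : ℝ => Pc ((y-ε)/b)) (Pd1 ((x-ε)/b) * (1/b)) x :=
    (hasDerivAt_Pc _).comp x hin
  exact (hasDerivAt_pow n x).mul hPC

lemma hasDerivAt_G1 (x : ℝ) : HasDerivAt (G1 n ε b) (G2 n ε b x) x := by
  have hin : HasDerivAt (fun y : ℝ => (y - ε)/b) (1/b) x :=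
    ((hasDerivAt_id x).sub_const ε).div_const b
  have hPC : HasDerivAt (fun y : ℝ => Pc ((y-ε)/b)) (Pd1 ((x-ε)/b) * (1/b)) x :=
    (hasDerivAt_Pc _).comp x hin
  have hP1 : HasDerivAt (fun y : ℝ => Pd1 ((y-ε)/b) * (1/b)) (Pd2 ((x-ε)/b) * (1/b) * (1/b)) x :=
    ((hasDerivAt_Pd1 _).comp x hin).mul_const (1/b)
  have T1 := (((hasDerivAt_pow (n-1) x).const_mul (n:ℝ)).mul hPC)
  have T2 := (hasDerivAt_pow n x).mul hP1
  refine (T1.add T2).congr_deriv ?_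
  unfold G2; ring

lemma hasDerivAt_G2 (x : ℝ) : HasDerivAt (G2 n ε b) (G3 n ε b x) x := by
  have hin : HasDerivAt (fun y : ℝ => (y - ε)/b) (1/b) x :=
    ((hasDerivAt_id x).sub_const ε).div_const b
  have hPC : HasDerivAt (fun y : ℝ => Pc ((y-ε)/b)) (Pd1 ((x-ε)/b) * (1/b)) x :=
    (hasDerivAt_Pc _).comp x hin
  have hP1 : HasDerivAt (fun y : ℝ => Pd1 ((y-ε)/b) * (1/b)) (Pd2 ((x-ε)/b) * (1/b) * (1/b)) x :=
    ((hasDerivAt_Pd1 _).comp x hin).mul_const (1/b)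
  have hP2 : HasDerivAt (fun y : ℝ => Pd2 ((y-ε)/b) * (1/b) * (1/b))
      (Pd3 ((x-ε)/b) * (1/b) * (1/b) * (1/b)) x :=
    (((hasDerivAt_Pd2 _).comp x hin).mul_const (1/b)).mul_const (1/b)
  have T1 := ((((hasDerivAt_pow (n-1-1) x).const_mul ((n-1:ℕ):ℝ)).const_mul (n:ℝ)).mul hPC)
  have T2 := ((((hasDerivAt_pow (n-1) x).const_mul (n:ℝ)).const_mul 2).mul hP1)
  have T3 := (hasDerivAt_pow n x).mul hP2
  refine ((T1.add T2).add T3).congr_deriv ?_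
  unfold G3; ring

lemma hasDerivAt_H0 (x : ℝ) : HasDerivAt (H0 n) (H1 n x) x := hasDerivAt_pow n x

lemma hasDerivAt_H1 (x : ℝ) : HasDerivAt (H1 n) (H2 n x) x :=
  (hasDerivAt_pow (n-1) x).const_mul (n:ℝ)

lemma hasDerivAt_H2 (x : ℝ) : HasDerivAt (H2 n) (H3 n x) x :=
  ((hasDerivAt_pow (n-1-1) x).const_mul ((n-1:ℕ):ℝ)).const_mul (n:ℝ)

end Gdefs

theorem stmt_9 (n : ℕ) (hn : 1 ≤ n) (ε b : ℝ) (hε : 0 < ε) (hb : 0 < b)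
    (ρ χ χn : ℝ → ℝ)
    (hρ : ∀ x : ℝ, ρ x = 2772 * ∫ y in (0:ℝ)..x, y ^ 5 * (1 - y) ^ 5)
    (hχ : ∀ x : ℝ, χ x =
      if x ≤ ε then 0 else if x < b + ε then ρ ((x - ε) / b) else 1)
    (hχn : ∀ x : ℝ, χn x = x ^ n * χ x) :
    ∃ c : ℝ,
      (∀ x : ℝ, 0 ≤ x → 0 < deriv χn x →
        (iteratedDeriv 3 χn x) ^ 2 ≤ c * (1 + χn x) * deriv χn x) ∧
      (∀ x ∈ Set.Ioi ε,
        |(iteratedDeriv 3 χn x) ^ 2 / deriv χn x| ≤ c * (1 + χn x)) := by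
  have hεa : ε < b + ε := by linarith
  have ρPc : ∀ x : ℝ, ρ x = Pc x := by
    intro x; rw [hρ, Pc_integral]
  have hPc0 : Pc 0 = 0 := by norm_num [Pc]
  have hPc1 : Pc 1 = 1 := by norm_num [Pc]
  have hPd10 : Pd1 0 = 0 := by norm_num [Pd1]
  have hPd11 : Pd1 1 = 0 := by norm_num [Pd1]
  have hPd21 : Pd2 1 = 0 := by norm_num [Pd2]
  have hPd31 : Pd3 1 = 0 := by norm_num [Pd3]
  have hta : ((b+ε) - ε)/b = 1 := by field_simp; ring
  have htε : ((ε:ℝ) - ε)/b = 0 := by simp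
  -- junction equalities
  have hj1 : G1 n ε b (b+ε) = H1 n (b+ε) := by
    unfold G1 H1; rw [hta, hPc1, hPd11]; ring
  have hj2 : G2 n ε b (b+ε) = H2 n (b+ε) := by
    unfold G2 H2; rw [hta, hPc1, hPd11, hPd21]; ring
  have hj3 : G3 n ε b (b+ε) = H3 n (b+ε) := by
    unfold G3 H3; rw [hta, hPc1, hPd11, hPd21, hPd31]; ring
  -- equalities of χn with the local models
  have χn0 : ∀ y : ℝ, y ≤ ε → χn y = 0 := by
    intro y hy; rw [hχn, hχ, if_pos hy, mul_zero]
  have heql : ∀ x ∈ Ioc ε (b+ε), χn x = G0 n ε b x := by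
    intro x hx
    rw [hχn, hχ, if_neg (not_le.mpr hx.1)]
    rcases lt_or_eq_of_le hx.2 with h | h
    · rw [if_pos h, ρPc]; rfl
    · subst h
      rw [if_neg (lt_irrefl _)]
      unfold G0; rw [hta, hPc1]
  have heqr : ∀ x ∈ Ici (b+ε), χn x = H0 n x := by
    intro x hx
    rw [hχn, hχ, if_neg (by simp only [not_le]; linarith [mem_Ici.mp hx]),
      if_neg (not_lt.mpr hx), mul_one]
    rfl
  -- gluing: first derivative
  have L1 : ∀ x ∈ Ioi ε, HasDerivAt χn (D1 n ε b x) x := by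
    have := glue_hasDerivAt hεa (hasDerivAt_G0 n ε b) (hasDerivAt_H0 n)
      heql heqr hj1
    intro x hx
    simpa [D1] using this x hx
  have heql1 : ∀ x ∈ Ioc ε (b+ε), D1 n ε b x = G1 n ε b x := by
    intro x hx; unfold D1; rw [if_pos hx.2]
  have heqr1 : ∀ x ∈ Ici (b+ε), D1 n ε b x = H1 n x := by
    intro x hx
    unfold D1
    by_cases hxa : x ≤ b + ε
    · have hxe : x = b + ε := le_antisymm hxa hx
      rw [if_pos hxa, hxe, hj1]
    · rw [if_neg hxa]
  have L2 : ∀ x ∈ Ioi ε, HasDerivAt (D1 n ε b) (D2 n ε b x) x := by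
    have := glue_hasDerivAt hεa (hasDerivAt_G1 n ε b) (hasDerivAt_H1 n)
      heql1 heqr1 hj2
    intro x hx
    simpa [D2] using this x hx
  have heql2 : ∀ x ∈ Ioc ε (b+ε), D2 n ε b x = G2 n ε b x := by
    intro x hx; unfold D2; rw [if_pos hx.2]
  have heqr2 : ∀ x ∈ Ici (b+ε), D2 n ε b x = H2 n x := by
    intro x hx
    unfold D2
    by_cases hxa : x ≤ b + ε
    · have hxe : x = b + ε := le_antisymm hxa hx
      rw [if_pos hxa, hxe, hj2]
    · rw [if_neg hxa]
  have L3 : ∀ x ∈ Ioi ε, HasDerivAt (D2 n ε b) (D3 n ε b x) x := by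
    have := glue_hasDerivAt hεa (hasDerivAt_G2 n ε b) (hasDerivAt_H2 n)
      heql2 heqr2 hj3
    intro x hx
    simpa [D3] using this x hx
  -- derivative identities on Ioi ε
  have E1 : ∀ x ∈ Ioi ε, deriv χn x = D1 n ε b x := fun x hx => (L1 x hx).deriv
  have E2 : ∀ x ∈ Ioi ε, deriv (deriv χn) x = D2 n ε b x := by
    intro x hx
    have hev : deriv χn =ᶠ[nhds x] D1 n ε b := by
      filter_upwards [isOpen_Ioi.mem_nhds hx] with y hy
      exact E1 y hy
    rw [hev.deriv_eq]
    exact (L2 x hx).deriv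
  have E3 : ∀ x ∈ Ioi ε, deriv (deriv (deriv χn)) x = D3 n ε b x := by
    intro x hx
    have hev : deriv (deriv χn) =ᶠ[nhds x] D2 n ε b := by
      filter_upwards [isOpen_Ioi.mem_nhds hx] with y hy
      exact E2 y hy
    rw [hev.deriv_eq]
    exact (L3 x hx).deriv
  have iter3 : ∀ x ∈ Ioi ε, iteratedDeriv 3 χn x = D3 n ε b x := by
    intro x hx
    have : iteratedDeriv 3 χn = deriv (deriv (deriv χn)) := by
      rw [show (3:ℕ) = 2 + 1 from rfl, iteratedDeriv_succ,
        show (2:ℕ) = 1 + 1 from rfl, iteratedDeriv_succ, iteratedDeriv_one]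
    rw [this]
    exact E3 x hx
  -- derivative vanishes for x ≤ ε
  have hple : ∀ x : ℝ, x ≤ ε → deriv χn x = 0 := by
    intro x hx
    rcases lt_or_eq_of_le hx with h | h
    · have hev : χn =ᶠ[nhds x] (fun _ => (0:ℝ)) := by
        filter_upwards [isOpen_Iio.mem_nhds h] with y hy
        exact χn0 y (le_of_lt hy)
      rw [hev.deriv_eq, deriv_const]
    · subst h
      have h1 : HasDerivWithinAt χn 0 (Iic x) x :=
        (hasDerivWithinAt_const x (Iic x) 0).congr (fun y hy => χn0 y hy) (χn0 x le_rfl)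
      have hG1x : G1 n x b x = 0 := by
        unfold G1
        rw [show (x - x)/b = 0 by simp, hPc0, hPd10]; ring
      have h2 : HasDerivWithinAt χn 0 (Ici x) x := by
        rw [← hG1x]
        apply ((hasDerivAt_G0 n x b x).hasDerivWithinAt).congr_of_eventuallyEq
        · filter_upwards [Icc_mem_nhdsGE_of_mem (⟨le_rfl, hεa⟩ : x ∈ Ico x (b+x))] with y hy
          rcases lt_or_eq_of_le hy.1 with h' | h'
          · exact heql y ⟨h', hy.2⟩
          · rw [← h', χn0 x le_rfl]
            unfold G0
            rw [show (x - x)/b = 0 by simp, hPc0, mul_zero]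
        · rw [χn0 x le_rfl]
          unfold G0
          rw [show (x - x)/b = 0 by simp, hPc0, mul_zero]
      have h3 := h1.union h2
      rw [Iic_union_Ici] at h3
      exact (hasDerivWithinAt_univ.mp h3).deriv
  -- basic positivity facts
  have hN : (1:ℝ) ≤ (n:ℝ) := by exact_mod_cast hn
  have hc10 : (0:ℝ) ≤ ((n-1:ℕ):ℝ) := Nat.cast_nonneg _
  have hc20 : (0:ℝ) ≤ ((n-1-1:ℕ):ℝ) := Nat.cast_nonneg _
  have hc1N : ((n-1:ℕ):ℝ) ≤ (n:ℝ) := by exact_mod_cast Nat.sub_le n 1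
  have hc2N : ((n-1-1:ℕ):ℝ) ≤ (n:ℝ) := by
    exact_mod_cast le_trans (Nat.sub_le _ _) (Nat.sub_le n 1)
  have ht0 : ∀ x : ℝ, ε < x → 0 < (x-ε)/b := fun x hx => div_pos (by linarith) hb
  have ht1 : ∀ x : ℝ, x ≤ b+ε → (x-ε)/b ≤ 1 := fun x hx => (div_le_one hb).mpr (by linarith)
  have hd1pos : ∀ x ∈ Ioi ε, 0 < D1 n ε b x := by
    intro x hx
    have hx' : ε < x := hx
    have h0x : (0:ℝ) < x := lt_trans hε hx'
    unfold D1
    by_cases hxa : x ≤ b + ε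
    · rw [if_pos hxa]
      unfold G1
      have hPcpos : 0 < Pc ((x-ε)/b) := Pc_pos (ht0 x hx') (ht1 x hxa)
      have hPd1nn : 0 ≤ Pd1 ((x-ε)/b) := Pd1_nonneg (ht0 x hx').le (ht1 x hxa)
      have term1 : 0 < (n:ℝ) * x^(n-1) * Pc ((x-ε)/b) := by
        apply mul_pos (mul_pos (by linarith) (pow_pos h0x _)) hPcpos
      have term2 : 0 ≤ x^n * (Pd1 ((x-ε)/b) * (1/b)) := by positivity
      linarith
    · rw [if_neg hxa]
      unfold H1
      exact mul_pos (by linarith) (pow_pos h0x _)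
  have hχnn : ∀ x ∈ Ioi ε, 0 ≤ χn x := by
    intro x hx
    have hx' : ε < x := hx
    have h0x : (0:ℝ) < x := lt_trans hε hx'
    rw [hχn, hχ, if_neg (not_le.mpr hx')]
    by_cases hxa : x < b + ε
    · rw [if_pos hxa, ρPc]
      have := Pc_nonneg (ht0 x hx').le (ht1 x (le_of_lt hxa))
      positivity
    · rw [if_neg hxa, mul_one]
      positivity
  -- constants
  set M : ℝ := max 1 (b+ε) ^ n with hM_def
  set m : ℝ := min 1 ε ^ n with hm_def
  have hmax1 : (1:ℝ) ≤ max 1 (b+ε) := le_max_left _ _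
  have hmin0 : (0:ℝ) < min 1 ε := lt_min one_pos hε
  have hmin1 : min 1 ε ≤ 1 := min_le_left _ _
  have hM0 : (0:ℝ) ≤ M := by positivity
  have hm0 : (0:ℝ) < m := pow_pos hmin0 n
  set N : ℝ := (n:ℝ) with hN_def
  set c₁ : ℝ := 4*(N^6*M^2/m + 9*N^4*M^2*2772*(1/b)/m + 9*N^2*M^2*69300*(1/b)^3/m
      + M^2*277200*(1/b)^5/m) with hc₁_def
  have hc₁0 : 0 ≤ c₁ := by
    rw [hc₁_def]
    have hN0 : (0:ℝ) ≤ N := by linarith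
    positivity
  obtain ⟨c₂, hc₂0, hc₂⟩ := region2 n hn (b+ε) (by linarith)
  set c : ℝ := max c₁ c₂ with hc_def
  have hc0 : 0 ≤ c := le_trans hc₁0 (le_max_left _ _)
  -- power bounds on (ε, b+ε]
  have hpowM : ∀ x : ℝ, ε < x → x ≤ b+ε → ∀ k : ℕ, k ≤ n → x^k ≤ M := by
    intro x hx hxa k hk
    have h0x : (0:ℝ) < x := lt_trans hε hx
    calc x^k ≤ (max 1 (b+ε))^k :=
          pow_le_pow_left₀ h0x.le (le_trans hxa (le_max_right _ _)) k
      _ ≤ (max 1 (b+ε))^n := pow_le_pow_right₀ hmax1 hk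
  have hpowm : ∀ x : ℝ, ε < x → ∀ k : ℕ, k ≤ n → m ≤ x^k := by
    intro x hx k hk
    calc m = min 1 ε ^ n := hm_def
      _ ≤ min 1 ε ^ k := pow_le_pow_of_le_one hmin0.le hmin1 hk
      _ ≤ x^k := pow_le_pow_left₀ hmin0.le (le_trans (min_le_right _ _) hx.le) k
  -- the core estimate
  have core : ∀ x ∈ Ioi ε, (D3 n ε b x)^2 ≤ c * (1 + χn x) * D1 n ε b x := by
    intro x hx
    have hx' : ε < x := hx
    have h0x : (0:ℝ) < x := lt_trans hε hx'
    have h1χ : (1:ℝ) ≤ 1 + χn x := by linarith [hχnn x hx]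
    by_cases hxa : x ≤ b + ε
    · -- middle region
      have ht0' := ht0 x hx'
      have ht1' := ht1 x hxa
      have hq0 := Pc_nonneg ht0'.le ht1'
      have hq1 := Pc_le_one ht0'.le ht1'
      have hp0 := Pd1_nonneg ht0'.le ht1'
      have hp1 := Pd1_le ht0'.le ht1'
      have hr2 := Pd2_sq ht0'.le ht1'
      have hr3 := Pd3_sq ht0'.le ht1'
      have hu : x^(n-1-1-1) ≤ M := hpowM x hx' hxa _ (by omega)
      have hv : x^(n-1-1) ≤ M := hpowM x hx' hxa _ (by omega)
      have hw : x^(n-1) ≤ M := hpowM x hx' hxa _ (by omega)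
      have hz : x^n ≤ M := hpowM x hx' hxa _ le_rfl
      have hwm : m ≤ x^(n-1) := hpowm x hx' _ (by omega)
      have hzm : m ≤ x^n := hpowm x hx' _ le_rfl
      have hS1 : m * Pc ((x-ε)/b) ≤ G1 n ε b x := by
        unfold G1
        have e1 : m * Pc ((x-ε)/b) ≤ N * x^(n-1) * Pc ((x-ε)/b) := by
          apply mul_le_mul_of_nonneg_right _ hq0
          calc m ≤ x^(n-1) := hwm
            _ = 1 * x^(n-1) := (one_mul _).symm
            _ ≤ N * x^(n-1) := by
                apply mul_le_mul_of_nonneg_right hN (by positivity)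
        have e2 : 0 ≤ x^n * (Pd1 ((x-ε)/b) * (1/b)) := by positivity
        linarith
      have hS2 : m * (Pd1 ((x-ε)/b) * (1/b)) ≤ G1 n ε b x := by
        unfold G1
        have e1 : m * (Pd1 ((x-ε)/b) * (1/b)) ≤ x^n * (Pd1 ((x-ε)/b) * (1/b)) := by
          apply mul_le_mul_of_nonneg_right hzm (by positivity)
        have e2 : 0 ≤ N * x^(n-1) * Pc ((x-ε)/b) := by positivity
        linarith
      have key := key_ineq N ((n-1:ℕ):ℝ) ((n-1-1:ℕ):ℝ)
        (x^(n-1-1-1)) (x^(n-1-1)) (x^(n-1)) (x^n)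
        (Pc ((x-ε)/b)) (Pd1 ((x-ε)/b)) (Pd2 ((x-ε)/b)) (Pd3 ((x-ε)/b))
        m M (G1 n ε b x) (1/b)
        hN hc10 hc1N hc20 hc2N
        (by positivity) hu (by positivity) hv (by positivity) hw
        (by positivity) hz hM0
        hq0 hq1 hp0 hp1 hr2 hr3 hm0 (by positivity) hS1 hS2
      have lhs_eq : D3 n ε b x = (N*(((n-1:ℕ):ℝ)*(((n-1-1:ℕ):ℝ)*x^(n-1-1-1)))*Pc ((x-ε)/b)
          + 3*(N*(((n-1:ℕ):ℝ)*x^(n-1-1)))*(Pd1 ((x-ε)/b)*(1/b))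
          + 3*(N*x^(n-1))*(Pd2 ((x-ε)/b)*(1/b)*(1/b))
          + x^n*(Pd3 ((x-ε)/b)*(1/b)*(1/b)*(1/b))) := by
        unfold D3; rw [if_pos hxa]; unfold G3; ring
      have d1_eq : D1 n ε b x = G1 n ε b x := by
        unfold D1; rw [if_pos hxa]
      rw [lhs_eq, d1_eq]
      calc (N*(((n-1:ℕ):ℝ)*(((n-1-1:ℕ):ℝ)*x^(n-1-1-1)))*Pc ((x-ε)/b)
          + 3*(N*(((n-1:ℕ):ℝ)*x^(n-1-1)))*(Pd1 ((x-ε)/b)*(1/b))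
          + 3*(N*x^(n-1))*(Pd2 ((x-ε)/b)*(1/b)*(1/b))
          + x^n*(Pd3 ((x-ε)/b)*(1/b)*(1/b)*(1/b)))^2
          ≤ c₁ * G1 n ε b x := by rw [hc₁_def]; exact key
        _ ≤ c * (1 + χn x) * G1 n ε b x := by
            have hG1nn : 0 ≤ G1 n ε b x := by
              have := hd1pos x hx
              unfold D1 at this; rw [if_pos hxa] at this
              linarith
            have s1 : c₁ ≤ c * (1 + χn x) := by
              calc c₁ ≤ c := le_max_left _ _
                _ = c * 1 := (mul_one c).symm
                _ ≤ c * (1 + χn x) := by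
                    apply mul_le_mul_of_nonneg_left h1χ hc0
            exact mul_le_mul_of_nonneg_right s1 hG1nn
    · -- outer region
      have hax : b + ε ≤ x := (not_le.mp hxa).le
      have hχnx : χn x = x^n := heqr x hax
      have lhs_eq : D3 n ε b x = H3 n x := by
        unfold D3; rw [if_neg hxa]
      have d1_eq : D1 n ε b x = H1 n x := by
        unfold D1; rw [if_neg hxa]
      rw [lhs_eq, d1_eq, hχnx]
      have key := hc₂ x hax
      unfold H3 H1
      calc ((n:ℝ)*(((n-1:ℕ):ℝ)*(((n-1-1:ℕ):ℝ)*x^(n-1-1-1))))^2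
          ≤ c₂ * (1+x^n) * ((n:ℝ)*x^(n-1)) := key
        _ ≤ c * (1+x^n) * ((n:ℝ)*x^(n-1)) := by
            have h1 : (0:ℝ) ≤ 1 + x^n := by positivity
            have h2 : (0:ℝ) ≤ (n:ℝ)*x^(n-1) := by positivity
            apply mul_le_mul_of_nonneg_right _ h2
            apply mul_le_mul_of_nonneg_right _ h1
            exact le_max_right _ _
  refine ⟨c, ?_, ?_⟩
  · intro x hx0 hpos
    rcases le_or_gt x ε with h | h
    · rw [hple x h] at hpos
      exact absurd hpos (lt_irrefl 0)
    · have hx : x ∈ Ioi ε := h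
      rw [iter3 x hx, E1 x hx]
      exact core x hx
  · intro x hx
    rw [iter3 x hx, E1 x hx]
    have hpos := hd1pos x hx
    rw [abs_of_nonneg (div_nonneg (sq_nonneg _) hpos.le), div_le_iff₀ hpos]
    exact core x hx
end

section
/- Let n ∈ ℤ, n ≥ 3, and ε, b > 0, with χₙ(x;ε,b) = xⁿχ(x;ε,b). Then there exists c = c(n,ε,b) such that (χₙ'''(x;ε,b))²/χₙ'(x;ε,b) ≤ c·χₙ₋₁(x; ε/3, b+ε) for all x > ε. -/
open MeasureTheory intervalIntegral Set

noncomputable def P0 (t : ℝ) : ℝ := 462*t^6 - 1980*t^7 + 3465*t^8 - 3080*t^9 + 1386*t^10 - 252*t^11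
noncomputable def P1 (t : ℝ) : ℝ := 2772 * (t^5*(1-t)^5)
noncomputable def P2 (t : ℝ) : ℝ := 13860 * (t^4*(1-t)^4*(1-2*t))
noncomputable def P3 (t : ℝ) : ℝ := 13860 * (t^3*(1-t)^3*(4*(1-2*t)^2 - 2*t*(1-t)))

lemma hP0' (t : ℝ) : HasDerivAt P0 (P1 t) t := by
  have h : HasDerivAt (fun t : ℝ => 462*t^6 - 1980*t^7 + 3465*t^8 - 3080*t^9 + 1386*t^10 - 252*t^11)
      (462*(6*t^5) - 1980*(7*t^6) + 3465*(8*t^7) - 3080*(9*t^8) + 1386*(10*t^9) - 252*(11*t^10)) t := by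
    have h6 := (hasDerivAt_pow 6 t).const_mul (462:ℝ)
    have h7 := (hasDerivAt_pow 7 t).const_mul (1980:ℝ)
    have h8 := (hasDerivAt_pow 8 t).const_mul (3465:ℝ)
    have h9 := (hasDerivAt_pow 9 t).const_mul (3080:ℝ)
    have h10 := (hasDerivAt_pow 10 t).const_mul (1386:ℝ)
    have h11 := (hasDerivAt_pow 11 t).const_mul (252:ℝ)
    have := ((((h6.sub h7).add h8).sub h9).add h10).sub h11
    refine this.congr_deriv ?_
    norm_num
  have := h
  unfold P0 P1
  convert h using 1
  ring

lemma hP1' (t : ℝ) : HasDerivAt P1 (P2 t) t := by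
  have h5 := hasDerivAt_pow 5 t
  have g : HasDerivAt (fun t : ℝ => (1-t)^5) (5*(1-t)^4 * (-1)) t := by
    have := ((hasDerivAt_id t).const_sub 1).pow 5
    refine this.congr_deriv ?_
    norm_num
  have := ((h5.mul g).const_mul (2772:ℝ))
  unfold P1 P2
  refine this.congr_deriv ?_
  push_cast
  ring

lemma hP2' (t : ℝ) : HasDerivAt P2 (P3 t) t := by
  have h4 := hasDerivAt_pow 4 t
  have g : HasDerivAt (fun t : ℝ => (1-t)^4) (4*(1-t)^3 * (-1)) t := by
    have := ((hasDerivAt_id t).const_sub 1).pow 4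
    refine this.congr_deriv ?_
    norm_num
  have l : HasDerivAt (fun t : ℝ => 1-2*t) (-2 : ℝ) t := by
    have := ((hasDerivAt_id t).const_mul 2).const_sub 1
    refine this.congr_deriv ?_
    norm_num
  have := (((h4.mul g).mul l).const_mul (13860:ℝ))
  unfold P2 P3
  refine this.congr_deriv ?_
  simp only [Pi.mul_apply]
  push_cast
  ring

lemma integral_eval (x : ℝ) :
    (∫ y in (0:ℝ)..x, y ^ 5 * (1 - y) ^ 5) = P0 x / 2772 := by
  have key : ∀ y : ℝ, HasDerivAt (fun z => P0 z / 2772) (y ^ 5 * (1 - y) ^ 5) y := by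
    intro y
    have := (hP0' y).div_const 2772
    refine this.congr_deriv ?_
    unfold P1; ring
  have hint : IntervalIntegrable (fun y : ℝ => y ^ 5 * (1 - y) ^ 5) volume 0 x := by
    apply Continuous.intervalIntegrable
    continuity
  have := intervalIntegral.integral_eq_sub_of_hasDerivAt (fun y _ => key y) hint
  simp only [this]
  norm_num [P0]

lemma P0_mono : StrictMonoOn P0 (Icc (0:ℝ) 1) := by
  apply strictMonoOn_of_deriv_pos (convex_Icc 0 1)
  · exact Continuous.continuousOn (by unfold P0; continuity)
  · intro x hx
    rw [interior_Icc] at hx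
    rw [(hP0' x).deriv]
    unfold P1
    have h1 : 0 < x := hx.1
    have h2 : (0:ℝ) < 1 - x := by linarith [hx.2]
    positivity

lemma P0_zero : P0 0 = 0 := by norm_num [P0]
lemma P0_one : P0 1 = 1 := by norm_num [P0]
lemma P0_half : P0 (1/2) = 1/2 := by norm_num [P0]
lemma P1_one : P1 1 = 0 := by norm_num [P1]
lemma P2_one : P2 1 = 0 := by norm_num [P2]
lemma P3_one : P3 1 = 0 := by norm_num [P3]

lemma chainP (P Q : ℝ → ℝ) (h : ∀ t, HasDerivAt P (Q t) t) (ε b x : ℝ) :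
    HasDerivAt (fun x => P ((x - ε) / b)) (Q ((x - ε) / b) / b) x := by
  have hi : HasDerivAt (fun x : ℝ => (x - ε) / b) (1 / b) x :=
    ((hasDerivAt_id x).sub_const ε).div_const b
  have := (h ((x - ε) / b)).comp x hi
  refine this.congr_deriv ?_
  ring

noncomputable def psi (n : ℕ) (ε b x : ℝ) : ℝ := x ^ n * P0 ((x - ε) / b)
noncomputable def psi1 (n : ℕ) (ε b x : ℝ) : ℝ :=
  (n:ℝ) * x ^ (n-1) * P0 ((x-ε)/b) + x ^ n * (P1 ((x-ε)/b) / b)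
noncomputable def psi2 (n : ℕ) (ε b x : ℝ) : ℝ :=
  (n:ℝ) * ((n:ℝ)-1) * x ^ (n-2) * P0 ((x-ε)/b) + 2*(n:ℝ) * x ^ (n-1) * (P1 ((x-ε)/b) / b)
    + x ^ n * (P2 ((x-ε)/b) / b^2)
noncomputable def psi3 (n : ℕ) (ε b x : ℝ) : ℝ :=
  (n:ℝ) * ((n:ℝ)-1) * ((n:ℝ)-2) * x ^ (n-3) * P0 ((x-ε)/b)
    + 3*(n:ℝ)*((n:ℝ)-1) * x ^ (n-2) * (P1 ((x-ε)/b) / b)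
    + 3*(n:ℝ) * x ^ (n-1) * (P2 ((x-ε)/b) / b^2)
    + x ^ n * (P3 ((x-ε)/b) / b^3)

lemma hpsi1 (n : ℕ) (hn : 3 ≤ n) (ε b x : ℝ) : HasDerivAt (psi n ε b) (psi1 n ε b x) x := by
  have := (hasDerivAt_pow n x).mul (chainP P0 P1 hP0' ε b x)
  unfold psi psi1
  exact this

lemma hpsi2 (n : ℕ) (hn : 3 ≤ n) (ε b x : ℝ) : HasDerivAt (psi1 n ε b) (psi2 n ε b x) x := by
  have t1 := ((hasDerivAt_pow (n-1) x).const_mul (n:ℝ)).mul (chainP P0 P1 hP0' ε b x)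
  have t2 := (hasDerivAt_pow n x).mul ((chainP P1 P2 hP1' ε b x).div_const b)
  have e1 : n - 1 - 1 = n - 2 := by omega
  have c1 : ((n-1:ℕ):ℝ) = (n:ℝ) - 1 := by
    push_cast [Nat.cast_sub (by omega : 1 ≤ n)]; ring
  rw [e1, c1] at t1
  have := t1.add t2
  unfold psi1 psi2
  refine this.congr_deriv ?_
  ring

lemma hpsi3 (n : ℕ) (hn : 3 ≤ n) (ε b x : ℝ) : HasDerivAt (psi2 n ε b) (psi3 n ε b x) x := by
  have t1 := ((hasDerivAt_pow (n-2) x).const_mul ((n:ℝ) * ((n:ℝ)-1))).mul (chainP P0 P1 hP0' ε b x)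
  have t2 := ((hasDerivAt_pow (n-1) x).const_mul (2*(n:ℝ))).mul ((chainP P1 P2 hP1' ε b x).div_const b)
  have t3 := (hasDerivAt_pow n x).mul ((chainP P2 P3 hP2' ε b x).div_const (b^2))
  have e1 : n - 2 - 1 = n - 3 := by omega
  have e2 : n - 1 - 1 = n - 2 := by omega
  have c1 : ((n-2:ℕ):ℝ) = (n:ℝ) - 2 := by
    push_cast [Nat.cast_sub (by omega : 2 ≤ n)]; ring
  have c2 : ((n-1:ℕ):ℝ) = (n:ℝ) - 1 := by
    push_cast [Nat.cast_sub (by omega : 1 ≤ n)]; ring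
  rw [e1, c1] at t1
  rw [e2, c2] at t2
  have := (t1.add t2).add t3
  unfold psi2 psi3
  refine this.congr_deriv ?_
  ring

lemma P0_nonneg {t : ℝ} (h0 : 0 ≤ t) (h1 : t ≤ 1) : 0 ≤ P0 t := by
  have := P0_mono.monotoneOn ⟨le_refl 0, by norm_num⟩ ⟨h0, h1⟩ h0
  rwa [P0_zero] at this

lemma P0_le_one {t : ℝ} (h0 : 0 ≤ t) (h1 : t ≤ 1) : P0 t ≤ 1 := by
  have := P0_mono.monotoneOn ⟨h0, h1⟩ ⟨by norm_num, le_refl 1⟩ h1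
  rwa [P0_one] at this

lemma P0_bd {t : ℝ} (h0 : 0 ≤ t) (h1 : t ≤ 1) : P0 t ≤ 462*t^3 := by
  unfold P0
  nlinarith [pow_le_pow_left₀ h0 h1 3, sq_nonneg t, sq_nonneg (1-t),
    mul_nonneg h0 (sub_nonneg.mpr h1), sq_nonneg (t*(1-t)), pow_nonneg h0 3,
    pow_nonneg h0 6, mul_nonneg (pow_nonneg h0 6) (sub_nonneg.mpr h1)]

lemma P1_nonneg {t : ℝ} (h0 : 0 ≤ t) (h1 : t ≤ 1) : 0 ≤ P1 t := by
  unfold P1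
  have : (0:ℝ) ≤ 1 - t := by linarith
  positivity

lemma P1_bd {t : ℝ} (h0 : 0 ≤ t) (h1 : t ≤ 1) : P1 t ≤ 2772*t^3 := by
  unfold P1
  have hu : (0:ℝ) ≤ 1 - t := by linarith
  have h54 : t^5 ≤ t^3 := pow_le_pow_of_le_one h0 h1 (by norm_num)
  have hs : (1-t)^5 ≤ 1 := pow_le_one₀ hu (by linarith)
  nlinarith [mul_le_mul h54 hs (by positivity) (by positivity : (0:ℝ) ≤ t^3)]

lemma P1_lb {t : ℝ} (h0 : 0 ≤ t) (hhalf : t ≤ 1/2) : 2772 * t^5 * (1/32) ≤ P1 t := by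
  unfold P1
  nlinarith [pow_nonneg h0 5,
    pow_le_pow_left₀ (by linarith : (0:ℝ) ≤ 1/2) (by linarith : (1:ℝ)/2 ≤ 1-t) 5]

lemma P2_bd {t : ℝ} (h0 : 0 ≤ t) (h1 : t ≤ 1) : |P2 t| ≤ 13860*t^3 := by
  unfold P2
  have hu : (0:ℝ) ≤ 1 - t := by linarith
  have hA0 : (0:ℝ) ≤ t^4*(1-t)^4 := by positivity
  have hA : t^4*(1-t)^4 ≤ t^3 := by
    have h43 : t^4 ≤ t^3 := pow_le_pow_of_le_one h0 h1 (by norm_num)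
    have hs : (1-t)^4 ≤ 1 := pow_le_one₀ hu (by linarith)
    nlinarith [mul_le_mul h43 hs (by positivity) (by positivity : (0:ℝ) ≤ t^3)]
  rw [abs_le]
  constructor <;> nlinarith [mul_nonneg hA0 hu]

lemma P3_bd {t : ℝ} (h0 : 0 ≤ t) (h1 : t ≤ 1) : |P3 t| ≤ 83160*t^3 := by
  unfold P3
  have hu : (0:ℝ) ≤ 1 - t := by linarith
  have hB0 : (0:ℝ) ≤ t^3*(1-t)^3 := by positivity
  have hB : t^3*(1-t)^3 ≤ t^3 := by
    have hs : (1-t)^3 ≤ 1 := pow_le_one₀ hu (by linarith)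
    nlinarith [pow_nonneg h0 3]
  have hC1 : 4*(1-2*t)^2 - 2*t*(1-t) ≤ 6 := by nlinarith [sq_nonneg t, mul_nonneg h0 hu]
  have hC2 : -6 ≤ 4*(1-2*t)^2 - 2*t*(1-t) := by nlinarith [sq_nonneg (1-2*t), mul_nonneg h0 hu]
  rw [abs_le]
  constructor <;>
    nlinarith [mul_nonneg hB0 (by linarith : (0:ℝ) ≤ 6 - (4*(1-2*t)^2 - 2*t*(1-t))),
      mul_nonneg hB0 (by linarith : (0:ℝ) ≤ (4*(1-2*t)^2 - 2*t*(1-t)) + 6)]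

lemma deriv_eq_on_open {s : Set ℝ} (hs : IsOpen s) {f g : ℝ → ℝ}
    (h : ∀ y ∈ s, f y = g y) : ∀ y ∈ s, deriv f y = deriv g y := by
  intro y hy
  apply Filter.EventuallyEq.deriv_eq
  filter_upwards [hs.mem_nhds hy] with z hz using h z hz

lemma glue_deriv {f g h : ℝ → ℝ} {εx p v : ℝ} (hεp : εx < p)
    (hfg : ∀ y ∈ Ioc εx p, f y = g y) (hfh : ∀ y ∈ Ici p, f y = h y)
    (hg : HasDerivAt g v p) (hh : HasDerivAt h v p) : HasDerivAt f v p := by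
  have left : HasDerivWithinAt f v (Iic p) p := by
    apply (hg.hasDerivWithinAt).congr_of_eventuallyEq
    · have hmem : Ioc εx p ∈ nhdsWithin p (Iic p) :=
        mem_nhdsWithin.mpr ⟨Ioi εx, isOpen_Ioi, hεp, fun y hy => ⟨hy.1, hy.2⟩⟩
      filter_upwards [hmem] with y hy using hfg y hy
    · exact hfg p ⟨hεp, le_refl p⟩
  have right : HasDerivWithinAt f v (Ici p) p := by
    apply (hh.hasDerivWithinAt).congr_of_eventuallyEq
    · filter_upwards [self_mem_nhdsWithin] with y hy using hfh y hy
    · exact hfh p (le_refl p)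
  have := HasFDerivWithinAt.union left right
  rw [Iic_union_Ici] at this
  exact hasDerivWithinAt_univ.mp this

lemma cf1 {nr : ℝ} (h : 3 ≤ nr) : 0 ≤ nr*(nr-1)*(nr-2) :=
  mul_nonneg (mul_nonneg (by linarith) (by linarith)) (by linarith)
lemma cf2 {nr : ℝ} (h : 3 ≤ nr) : nr*(nr-1)*(nr-2) ≤ nr^3 := by nlinarith
lemma cf3 {nr : ℝ} (h : 3 ≤ nr) : 0 ≤ 3*nr*(nr-1) := by nlinarith
lemma cf4 {nr : ℝ} (h : 3 ≤ nr) : 3*nr*(nr-1) ≤ nr^3 := by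
  nlinarith [mul_nonneg (sq_nonneg nr) (by linarith : (0:ℝ) ≤ nr - 3), sq_nonneg nr]
lemma cf5 {nr : ℝ} (h : 3 ≤ nr) : 0 ≤ 3*nr := by nlinarith
lemma cf6 {nr : ℝ} (h : 3 ≤ nr) : 3*nr ≤ nr^3 := by
  nlinarith [mul_nonneg (by linarith : (0:ℝ) ≤ nr) (by nlinarith : (0:ℝ) ≤ nr^2 - 3)]
lemma cf7 {nr : ℝ} (h : 3 ≤ nr) : (nr*(nr-1)*(nr-2))^2 ≤ nr^6 := by nlinarith [cf1 h, cf2 h]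

lemma term_bd {c1 c2 xp mp P Q : ℝ} (hc1 : 0 ≤ c1) (hc12 : c1 ≤ c2) (hxp : 0 ≤ xp)
    (hxpm : xp ≤ mp) (hPQ : |P| ≤ Q) : |c1 * xp * P| ≤ c2 * mp * Q := by
  rw [abs_mul, abs_mul, abs_of_nonneg hc1, abs_of_nonneg hxp]
  have hc2 : 0 ≤ c2 := le_trans hc1 hc12
  have hmp : 0 ≤ mp := le_trans hxp hxpm
  exact mul_le_mul (mul_le_mul hc12 hxpm hxp hc2) hPQ (abs_nonneg P) (mul_nonneg hc2 hmp)

set_option maxHeartbeats 2000000 in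
theorem stmt_11 (n : ℕ) (hn : 3 ≤ n) (ε b : ℝ) (hε : 0 < ε) (hb : 0 < b)
    (ρ : ℝ → ℝ) (χ : ℝ → ℝ → ℝ → ℝ) (χm : ℕ → ℝ → ℝ → ℝ → ℝ)
    (hρ : ∀ x : ℝ, ρ x = 2772 * ∫ y in (0:ℝ)..x, y ^ 5 * (1 - y) ^ 5)
    (hχ : ∀ α β x : ℝ, 0 < α → 0 < β → χ α β x =
      if x ≤ α then 0 else if x < β + α then ρ ((x - α) / β) else 1)
    (hχm : ∀ (m : ℕ) (α β x : ℝ), χm m α β x = x ^ m * χ α β x) :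
    ∃ c : ℝ, ∀ x : ℝ, ε < x →
      (iteratedDeriv 3 (χm n ε b) x) ^ 2 / deriv (χm n ε b) x
        ≤ c * χm (n - 1) (ε / 3) (b + ε) x := by
  have hb0 : b ≠ 0 := ne_of_gt hb
  have hrho : ∀ x, ρ x = P0 x := by
    intro x; rw [hρ x, integral_eval]; ring
  set p := b + ε with hpdef
  have hεp : ε < p := by simp only [hpdef]; linarith
  set f := χm n ε b with hfdef
  -- f = psi on Ioc ε p
  have hfpsi : ∀ y ∈ Ioc ε p, f y = psi n ε b y := by
    intro y hy
    rw [hfdef, hχm n ε b y, hχ ε b y hε hb, if_neg (not_le.mpr hy.1)]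
    by_cases hyp : y < b + ε
    · rw [if_pos hyp, hrho]; rfl
    · have hyeq : y = p := le_antisymm hy.2 (not_lt.mp hyp)
      rw [if_neg hyp]
      unfold psi
      rw [hyeq, show (p - ε)/b = 1 by field_simp [hpdef]; linarith, P0_one]
  have hfpow : ∀ y ∈ Ici p, f y = y ^ n := by
    intro y hy
    rw [hfdef, hχm n ε b y, hχ ε b y hε hb,
      if_neg (not_le.mpr (lt_of_lt_of_le hεp hy)), if_neg (not_lt.mpr hy), mul_one]
  have harg1 : (p - ε)/b = 1 := by field_simp [hpdef]; linarith
  -- level 1 derivatives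
  have hd1mid : ∀ y ∈ Ioo ε p, deriv f y = psi1 n ε b y := by
    intro y hy
    rw [deriv_eq_on_open isOpen_Ioo (fun z hz => hfpsi z ⟨hz.1, le_of_lt hz.2⟩) y hy]
    exact (hpsi1 n hn ε b y).deriv
  have hd1out : ∀ y ∈ Ioi p, deriv f y = (n:ℝ) * y ^ (n-1) := by
    intro y hy
    rw [deriv_eq_on_open isOpen_Ioi (fun z hz => hfpow z (mem_Ici.mpr (le_of_lt hz))) y hy]
    exact (hasDerivAt_pow n y).deriv
  have hpsi1p : psi1 n ε b p = (n:ℝ) * p ^ (n-1) := by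
    unfold psi1; rw [harg1, P0_one, P1_one]; ring
  have H1p : HasDerivAt f ((n:ℝ) * p ^ (n-1)) p := by
    refine glue_deriv hεp hfpsi hfpow ?_ ?_
    · rw [← hpsi1p]; exact hpsi1 n hn ε b p
    · exact hasDerivAt_pow n p
  have hd1p : deriv f p = (n:ℝ) * p ^ (n-1) := H1p.deriv
  have hD1psi : ∀ y ∈ Ioc ε p, deriv f y = psi1 n ε b y := by
    intro y hy
    rcases eq_or_lt_of_le hy.2 with h | h
    · rw [h, hd1p, hpsi1p]
    · exact hd1mid y ⟨hy.1, h⟩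
  have hD1pow : ∀ y ∈ Ici p, deriv f y = (n:ℝ) * y ^ (n-1) := by
    intro y hy
    rcases eq_or_lt_of_le (mem_Ici.mp hy) with h | h
    · rw [← h, hd1p]
    · exact hd1out y h
  -- level 2
  have hpowd2 : ∀ y : ℝ, HasDerivAt (fun z => (n:ℝ) * z ^ (n-1)) ((n:ℝ)*((n:ℝ)-1)*y^(n-2)) y := by
    intro y
    have := (hasDerivAt_pow (n-1) y).const_mul (n:ℝ)
    have e1 : n - 1 - 1 = n - 2 := by omega
    have c1 : ((n-1:ℕ):ℝ) = (n:ℝ) - 1 := by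
      push_cast [Nat.cast_sub (by omega : 1 ≤ n)]; ring
    rw [e1, c1] at this
    refine this.congr_deriv ?_; ring
  have hd2mid : ∀ y ∈ Ioo ε p, deriv (deriv f) y = psi2 n ε b y := by
    intro y hy
    rw [deriv_eq_on_open isOpen_Ioo (fun z hz => hd1mid z hz) y hy]
    exact (hpsi2 n hn ε b y).deriv
  have hd2out : ∀ y ∈ Ioi p, deriv (deriv f) y = (n:ℝ)*((n:ℝ)-1)*y^(n-2) := by
    intro y hy
    rw [deriv_eq_on_open isOpen_Ioi (fun z hz => hd1out z hz) y hy]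
    exact (hpowd2 y).deriv
  have hpsi2p : psi2 n ε b p = (n:ℝ)*((n:ℝ)-1) * p ^ (n-2) := by
    unfold psi2; rw [harg1, P0_one, P1_one, P2_one]; ring
  have H2p : HasDerivAt (deriv f) ((n:ℝ)*((n:ℝ)-1) * p ^ (n-2)) p := by
    refine glue_deriv hεp hD1psi hD1pow ?_ ?_
    · rw [← hpsi2p]; exact hpsi2 n hn ε b p
    · exact hpowd2 p
  have hd2p : deriv (deriv f) p = (n:ℝ)*((n:ℝ)-1) * p ^ (n-2) := H2p.deriv
  have hD2psi : ∀ y ∈ Ioc ε p, deriv (deriv f) y = psi2 n ε b y := by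
    intro y hy
    rcases eq_or_lt_of_le hy.2 with h | h
    · rw [h, hd2p, hpsi2p]
    · exact hd2mid y ⟨hy.1, h⟩
  have hD2pow : ∀ y ∈ Ici p, deriv (deriv f) y = (n:ℝ)*((n:ℝ)-1) * y ^ (n-2) := by
    intro y hy
    rcases eq_or_lt_of_le (mem_Ici.mp hy) with h | h
    · rw [← h, hd2p]
    · exact hd2out y h
  -- level 3
  have hpowd3 : ∀ y : ℝ, HasDerivAt (fun z => (n:ℝ)*((n:ℝ)-1) * z ^ (n-2))
      ((n:ℝ)*((n:ℝ)-1)*((n:ℝ)-2)*y^(n-3)) y := by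
    intro y
    have := (hasDerivAt_pow (n-2) y).const_mul ((n:ℝ)*((n:ℝ)-1))
    have e1 : n - 2 - 1 = n - 3 := by omega
    have c1 : ((n-2:ℕ):ℝ) = (n:ℝ) - 2 := by
      push_cast [Nat.cast_sub (by omega : 2 ≤ n)]; ring
    rw [e1, c1] at this
    refine this.congr_deriv ?_; ring
  have hd3mid : ∀ y ∈ Ioo ε p, deriv (deriv (deriv f)) y = psi3 n ε b y := by
    intro y hy
    rw [deriv_eq_on_open isOpen_Ioo (fun z hz => hd2mid z hz) y hy]
    exact (hpsi3 n hn ε b y).deriv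
  have hd3out : ∀ y ∈ Ioi p, deriv (deriv (deriv f)) y = (n:ℝ)*((n:ℝ)-1)*((n:ℝ)-2)*y^(n-3) := by
    intro y hy
    rw [deriv_eq_on_open isOpen_Ioi (fun z hz => hd2out z hz) y hy]
    exact (hpowd3 y).deriv
  have hpsi3p : psi3 n ε b p = (n:ℝ)*((n:ℝ)-1)*((n:ℝ)-2) * p ^ (n-3) := by
    unfold psi3; rw [harg1, P0_one, P1_one, P2_one, P3_one]; ring
  have H3p : HasDerivAt (deriv (deriv f)) ((n:ℝ)*((n:ℝ)-1)*((n:ℝ)-2) * p ^ (n-3)) p := by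
    refine glue_deriv hεp hD2psi hD2pow ?_ ?_
    · rw [← hpsi3p]; exact hpsi3 n hn ε b p
    · exact hpowd3 p
  have hd3p : deriv (deriv (deriv f)) p = (n:ℝ)*((n:ℝ)-1)*((n:ℝ)-2) * p ^ (n-3) := H3p.deriv
  have hit : iteratedDeriv 3 f = deriv (deriv (deriv f)) := by
    rw [show (3:ℕ) = 2+1 from rfl, iteratedDeriv_succ,
      show (2:ℕ) = 1+1 from rfl, iteratedDeriv_succ, iteratedDeriv_one]
  -- lower bound for the chi factor
  set s0 : ℝ := (2*ε/3)/(b+ε) with hs0def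
  have hs0pos : 0 < s0 := by apply div_pos <;> linarith
  have hs0lt : s0 < 1 := by
    rw [div_lt_one (by linarith)]; linarith
  set m0 : ℝ := P0 s0 with hm0def
  have hm0pos : 0 < m0 := by
    have := P0_mono ⟨le_refl 0, by norm_num⟩ ⟨le_of_lt hs0pos, le_of_lt hs0lt⟩ hs0pos
    rwa [P0_zero] at this
  have hm0le1 : m0 ≤ 1 := P0_le_one (le_of_lt hs0pos) (le_of_lt hs0lt)
  have hchibd : ∀ x : ℝ, ε < x → m0 ≤ χ (ε/3) (b+ε) x := by
    intro x hx
    rw [hχ (ε/3) (b+ε) x (by linarith) (by linarith)]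
    rw [if_neg (by push_neg; linarith : ¬ x ≤ ε/3)]
    by_cases h2 : x < (b+ε) + ε/3
    · rw [if_pos h2, hrho]
      have hden : (0:ℝ) < b + ε := by linarith
      have hsx0 : 0 ≤ (x - ε/3)/(b+ε) := by
        apply div_nonneg _ (le_of_lt hden); linarith
      have hsx1 : (x - ε/3)/(b+ε) ≤ 1 := by
        rw [div_le_one hden]; linarith
      have hss : s0 ≤ (x - ε/3)/(b+ε) := by
        rw [hs0def, div_le_div_iff_of_pos_right hden]; linarith
      exact P0_mono.monotoneOn ⟨le_of_lt hs0pos, le_of_lt hs0lt⟩ ⟨hsx0, hsx1⟩ hss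
    · rw [if_neg h2]; exact hm0le1
  -- constants
  set M : ℝ := max 1 p with hMdef
  have hM1 : (1:ℝ) ≤ M := le_max_left 1 p
  have hMp : p ≤ M := le_max_right 1 p
  have hn3 : (3:ℝ) ≤ (n:ℝ) := by exact_mod_cast hn
  have hnpos : (0:ℝ) < (n:ℝ) := by linarith
  set K : ℝ := M^n*((n:ℝ)^3*(462 + 2772/b + 13860/b^2) + 83160/b^3) with hKdef
  set δ1 : ℝ := 86 * ε^n / b with hδ1def
  set δ2 : ℝ := (n:ℝ) * ε^(n-1) / 2 with hδ2def
  have hδ1 : 0 < δ1 := by rw [hδ1def]; positivity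
  have hδ2 : 0 < δ2 := by
    rw [hδ2def]; apply div_pos (mul_pos hnpos (by positivity)); norm_num
  set E : ℝ := ε^(n-1) * m0 with hEdef
  have hE : 0 < E := by rw [hEdef]; exact mul_pos (by positivity) hm0pos
  set c1 : ℝ := (K^2/δ1 + K^2/δ2) / E with hc1def
  set c2 : ℝ := (n:ℝ)^6 / (m0 * (n:ℝ) * ε^4) with hc2def
  have hc1 : 0 ≤ c1 := by
    rw [hc1def]
    apply div_nonneg _ (le_of_lt hE)
    have h1 : 0 ≤ K^2/δ1 := div_nonneg (by positivity) (le_of_lt hδ1)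
    have h2 : 0 ≤ K^2/δ2 := div_nonneg (by positivity) (le_of_lt hδ2)
    exact add_nonneg h1 h2
  have hc2 : 0 ≤ c2 := by
    rw [hc2def]
    exact le_of_lt (div_pos (by positivity) (mul_pos (mul_pos hm0pos hnpos) (by positivity)))
  refine ⟨c1 + c2, ?_⟩
  intro x hx
  have hx0 : 0 < x := lt_trans hε hx
  set R : ℝ := χm (n-1) (ε/3) p x with hRdef
  have hRx : x^(n-1) * m0 ≤ R := by
    rw [hRdef, hχm (n-1) (ε/3) p x]
    exact mul_le_mul_of_nonneg_left (hchibd x hx) (by positivity)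
  have hRge : E ≤ R := by
    refine le_trans ?_ hRx
    rw [hEdef]
    exact mul_le_mul_of_nonneg_right (pow_le_pow_left₀ (le_of_lt hε) (le_of_lt hx) _)
      (le_of_lt hm0pos)
  have hR0 : 0 < R := lt_of_lt_of_le hE hRge
  rcases lt_or_ge x p with hxp | hpx
  · -- middle region ε < x < p
    set t : ℝ := (x - ε)/b with htdef
    have ht0 : 0 < t := div_pos (by linarith only [hx]) hb
    have ht1 : t < 1 := by
      rw [htdef, div_lt_one hb]
      have : x < b + ε := by rw [← hpdef]; exact hxp
      linarith only [this]
    have hI3 : iteratedDeriv 3 f x = psi3 n ε b x := by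
      rw [hit]; exact hd3mid x ⟨hx, hxp⟩
    have hI1 : deriv f x = psi1 n ε b x := hd1mid x ⟨hx, hxp⟩
    have hxpow : ∀ k : ℕ, k ≤ n → x ^ k ≤ M^n := by
      intro k hk
      calc x^k ≤ M^k :=
            pow_le_pow_left₀ (le_of_lt hx0) (le_trans (le_of_lt hxp) hMp) k
        _ ≤ M^n := pow_le_pow_right₀ hM1 hk
    have hP0t : 0 ≤ P0 t := P0_nonneg (le_of_lt ht0) (le_of_lt ht1)
    have hP1t : 0 ≤ P1 t := P1_nonneg (le_of_lt ht0) (le_of_lt ht1)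
    -- |psi3| ≤ K t^3
    have hT1 : |(n:ℝ)*((n:ℝ)-1)*((n:ℝ)-2) * x^(n-3) * P0 t| ≤ (n:ℝ)^3 * M^n * (462*t^3) := by
      refine term_bd (cf1 hn3) (cf2 hn3) (by positivity) (hxpow _ (by omega)) ?_
      rw [abs_of_nonneg hP0t]
      exact P0_bd (le_of_lt ht0) (le_of_lt ht1)
    have hT2 : |3*(n:ℝ)*((n:ℝ)-1) * x^(n-2) * (P1 t / b)| ≤ (n:ℝ)^3 * M^n * (2772*t^3/b) := by
      refine term_bd (cf3 hn3) (cf4 hn3) (by positivity) (hxpow _ (by omega)) ?_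
      rw [abs_div, abs_of_pos hb, abs_of_nonneg hP1t]
      exact div_le_div_of_nonneg_right (P1_bd (le_of_lt ht0) (le_of_lt ht1)) hb.le
    have hT3 : |3*(n:ℝ) * x^(n-1) * (P2 t / b^2)| ≤ (n:ℝ)^3 * M^n * (13860*t^3/b^2) := by
      refine term_bd (cf5 hn3) (cf6 hn3) (by positivity) (hxpow _ (by omega)) ?_
      rw [abs_div, abs_of_pos (by positivity : (0:ℝ) < b^2)]
      exact div_le_div_of_nonneg_right (P2_bd (le_of_lt ht0) (le_of_lt ht1)) (by positivity) |>.trans (le_refl _)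
    have hT4 : |x^n * (P3 t / b^3)| ≤ M^n * (83160*t^3/b^3) := by
      rw [abs_mul, abs_of_nonneg (by positivity : (0:ℝ) ≤ x^n)]
      refine mul_le_mul (hxpow n le_rfl) ?_ (abs_nonneg _) (by positivity)
      rw [abs_div, abs_of_pos (by positivity : (0:ℝ) < b^3)]
      exact div_le_div_of_nonneg_right (P3_bd (le_of_lt ht0) (le_of_lt ht1)) (by positivity) |>.trans (le_refl _)
    have hpsi3x : psi3 n ε b x = (n:ℝ)*((n:ℝ)-1)*((n:ℝ)-2) * x^(n-3) * P0 t
        + 3*(n:ℝ)*((n:ℝ)-1) * x^(n-2) * (P1 t / b)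
        + 3*(n:ℝ) * x^(n-1) * (P2 t / b^2) + x^n * (P3 t / b^3) := by
      unfold psi3; rw [← htdef]
    have habs : |psi3 n ε b x| ≤ K * t^3 := by
      rw [hpsi3x]
      have h4 := abs_add_le ((n:ℝ)*((n:ℝ)-1)*((n:ℝ)-2) * x^(n-3) * P0 t
        + 3*(n:ℝ)*((n:ℝ)-1) * x^(n-2) * (P1 t / b)
        + 3*(n:ℝ) * x^(n-1) * (P2 t / b^2)) (x^n * (P3 t / b^3))
      have h3 := abs_add_le ((n:ℝ)*((n:ℝ)-1)*((n:ℝ)-2) * x^(n-3) * P0 t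
        + 3*(n:ℝ)*((n:ℝ)-1) * x^(n-2) * (P1 t / b)) (3*(n:ℝ) * x^(n-1) * (P2 t / b^2))
      have h2 := abs_add_le ((n:ℝ)*((n:ℝ)-1)*((n:ℝ)-2) * x^(n-3) * P0 t)
        (3*(n:ℝ)*((n:ℝ)-1) * x^(n-2) * (P1 t / b))
      have hsum : (n:ℝ)^3 * M^n * (462*t^3) + (n:ℝ)^3 * M^n * (2772*t^3/b)
          + (n:ℝ)^3 * M^n * (13860*t^3/b^2) + M^n * (83160*t^3/b^3) = K * t^3 := by
        rw [hKdef]; ring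
      linarith only [h2, h3, h4, hT1, hT2, hT3, hT4, hsum]
    have hsq : psi3 n ε b x ^ 2 ≤ K^2 * t^6 := by
      have h1 : psi3 n ε b x ^ 2 = |psi3 n ε b x|^2 := (sq_abs _).symm
      rw [h1]
      calc |psi3 n ε b x|^2 ≤ (K*t^3)^2 :=
          pow_le_pow_left₀ (abs_nonneg _) habs 2
        _ = K^2 * t^6 := by ring
    rcases le_or_gt t (1/2) with hth | hth
    · -- t ≤ 1/2
      have hψ1 : δ1 * t^5 ≤ psi1 n ε b x := by
        have hP1lb := P1_lb (le_of_lt ht0) hth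
        have hxn : ε^n ≤ x^n := pow_le_pow_left₀ (le_of_lt hε) (le_of_lt hx) n
        have hfirst : 0 ≤ (n:ℝ) * x^(n-1) * P0 t := by
          apply mul_nonneg (by positivity) hP0t
        have ht5 : (0:ℝ) ≤ t^5 := pow_nonneg (le_of_lt ht0) 5
        have h1 : 86*t^5 ≤ P1 t := by linarith only [hP1lb, ht5]
        have h2 : ε^n * (86*t^5/b) ≤ x^n * (P1 t / b) := by
          apply mul_le_mul hxn _ (div_nonneg (by linarith only [ht5]) (le_of_lt hb)) (by positivity)
          exact div_le_div_of_nonneg_right h1 hb.le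
        have heq : δ1 * t^5 = ε^n * (86*t^5/b) := by rw [hδ1def]; ring
        have hpsi1x : psi1 n ε b x = (n:ℝ) * x^(n-1) * P0 t + x^n * (P1 t / b) := by
          unfold psi1; rw [← htdef]
        rw [hpsi1x, heq]; linarith only [hfirst, h2]
      have hψ1pos : 0 < psi1 n ε b x :=
        lt_of_lt_of_le (mul_pos hδ1 (pow_pos ht0 5)) hψ1
      rw [hI3, hI1, div_le_iff₀ hψ1pos]
      have hcR : K^2/δ1 ≤ (c1+c2) * R := by
        have hceq : c1 * E = K^2/δ1 + K^2/δ2 := by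
          rw [hc1def]; field_simp
        have h2 : 0 ≤ K^2/δ2 := div_nonneg (by positivity) (le_of_lt hδ2)
        have h3 : c1 * E ≤ c1 * R := mul_le_mul_of_nonneg_left hRge hc1
        have h4 : 0 ≤ c2 * R := mul_nonneg hc2 (le_of_lt hR0)
        have h5 : (c1+c2)*R = c1*R + c2*R := by ring
        linarith only [hceq, h2, h3, h4, h5]
      calc psi3 n ε b x ^ 2 ≤ K^2 * t^6 := hsq
        _ ≤ K^2 * t^5 :=
            mul_le_mul_of_nonneg_left
              (pow_le_pow_of_le_one (le_of_lt ht0) (le_of_lt ht1) (by norm_num))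
              (sq_nonneg K)
        _ = (K^2/δ1) * (δ1 * t^5) := by field_simp
        _ ≤ ((c1+c2) * R) * psi1 n ε b x :=
            mul_le_mul hcR hψ1 (le_of_lt (mul_pos hδ1 (pow_pos ht0 5)))
              (mul_nonneg (add_nonneg hc1 hc2) (le_of_lt hR0))
        _ = (c1+c2) * R * psi1 n ε b x := by ring
    · -- t > 1/2
      have hψ1 : δ2 ≤ psi1 n ε b x := by
        have hmono : P0 (1/2) ≤ P0 t :=
          P0_mono.monotoneOn ⟨by norm_num, by norm_num⟩ ⟨le_of_lt ht0, le_of_lt ht1⟩ (le_of_lt hth)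
        rw [P0_half] at hmono
        have hxn1 : ε^(n-1) ≤ x^(n-1) := pow_le_pow_left₀ (le_of_lt hε) (le_of_lt hx) _
        have hsecond : 0 ≤ x^n * (P1 t / b) :=
          mul_nonneg (by positivity) (div_nonneg hP1t (le_of_lt hb))
        have h1 : δ2 ≤ (n:ℝ) * x^(n-1) * P0 t := by
          have : (n:ℝ) * ε^(n-1) * (1/2) ≤ (n:ℝ) * x^(n-1) * P0 t := by
            apply mul_le_mul (mul_le_mul_of_nonneg_left hxn1 (le_of_lt hnpos)) hmono
              (by norm_num) (by positivity)
          rw [hδ2def]; linarith only [this]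
        have hpsi1x : psi1 n ε b x = (n:ℝ) * x^(n-1) * P0 t + x^n * (P1 t / b) := by
          unfold psi1; rw [← htdef]
        rw [hpsi1x]; linarith only [h1, hsecond]
      have hψ1pos : 0 < psi1 n ε b x := lt_of_lt_of_le hδ2 hψ1
      rw [hI3, hI1, div_le_iff₀ hψ1pos]
      have hcR : K^2/δ2 ≤ (c1+c2) * R := by
        have hceq : c1 * E = K^2/δ1 + K^2/δ2 := by
          rw [hc1def]; field_simp
        have h2 : 0 ≤ K^2/δ1 := div_nonneg (by positivity) (le_of_lt hδ1)
        have h3 : c1 * E ≤ c1 * R := mul_le_mul_of_nonneg_left hRge hc1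
        have h4 : 0 ≤ c2 * R := mul_nonneg hc2 (le_of_lt hR0)
        have h5 : (c1+c2)*R = c1*R + c2*R := by ring
        linarith only [hceq, h2, h3, h4, h5]
      calc psi3 n ε b x ^ 2 ≤ K^2 * t^6 := hsq
        _ ≤ K^2 := by
            have h6 : K^2 * t^6 ≤ K^2 * 1 :=
              mul_le_mul_of_nonneg_left (pow_le_one₀ (le_of_lt ht0) (le_of_lt ht1)) (sq_nonneg K)
            linarith only [h6]
        _ = (K^2/δ2) * δ2 := by field_simp
        _ ≤ ((c1+c2) * R) * psi1 n ε b x :=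
            mul_le_mul hcR hψ1 (le_of_lt hδ2)
              (mul_nonneg (add_nonneg hc1 hc2) (le_of_lt hR0))
        _ = (c1+c2) * R * psi1 n ε b x := by ring
  · -- outer region x ≥ p
    have hI3 : iteratedDeriv 3 f x = (n:ℝ)*((n:ℝ)-1)*((n:ℝ)-2)*x^(n-3) := by
      rw [hit]
      rcases eq_or_lt_of_le hpx with h | h
      · rw [← h]; exact hd3p
      · exact hd3out x h
    have hI1 : deriv f x = (n:ℝ)*x^(n-1) := by
      rcases eq_or_lt_of_le hpx with h | h
      · rw [← h]; exact hd1p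
      · exact hd1out x h
    have hD : 0 < (n:ℝ)*x^(n-1) := mul_pos hnpos (by positivity)
    rw [hI3, hI1, div_le_iff₀ hD]
    have hx4 : ε^4 ≤ x^4 := pow_le_pow_left₀ (le_of_lt hε) (le_of_lt hx) 4
    have hexp : x^(n-1)*x^(n-1) = x^(n-3)*x^(n-3)*x^4 := by
      rw [← pow_add, ← pow_add, ← pow_add]; congr 1; omega
    have hcc0 : 0 ≤ (n:ℝ)*((n:ℝ)-1)*((n:ℝ)-2) := cf1 hn3
    have hcc : (n:ℝ)*((n:ℝ)-1)*((n:ℝ)-2) ≤ (n:ℝ)^3 := cf2 hn3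
    have hkey : ((n:ℝ)*((n:ℝ)-1)*((n:ℝ)-2)*x^(n-3))^2 ≤ c2 * (x^(n-1)*m0) * ((n:ℝ)*x^(n-1)) := by
      have h1 : ((n:ℝ)*((n:ℝ)-1)*((n:ℝ)-2))^2 ≤ (n:ℝ)^6 := cf7 hn3
      have h2 : c2 * (x^(n-1)*m0) * ((n:ℝ)*x^(n-1)) = (n:ℝ)^6 * (x^(n-3)*x^(n-3)*x^4) / ε^4 := by
        rw [← hexp, hc2def]
        field_simp
      rw [h2, le_div_iff₀ (by positivity : (0:ℝ) < ε^4)]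
      have hxp3 : (0:ℝ) ≤ x^(n-3) := by positivity
      have h3 : ((n:ℝ)*((n:ℝ)-1)*((n:ℝ)-2))^2 * ε^4 ≤ (n:ℝ)^6 * x^4 :=
        mul_le_mul h1 hx4 (by positivity) (by positivity)
      have h4 := mul_le_mul_of_nonneg_right h3 (mul_nonneg hxp3 hxp3)
      calc ((n:ℝ)*((n:ℝ)-1)*((n:ℝ)-2)*x^(n-3))^2 * ε^4
          = ((n:ℝ)*((n:ℝ)-1)*((n:ℝ)-2))^2 * ε^4 * (x^(n-3)*x^(n-3)) := by ring
        _ ≤ (n:ℝ)^6 * x^4 * (x^(n-3)*x^(n-3)) := h4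
        _ = (n:ℝ)^6 * (x^(n-3)*x^(n-3)*x^4) := by ring
    calc ((n:ℝ)*((n:ℝ)-1)*((n:ℝ)-2)*x^(n-3))^2
        ≤ c2 * (x^(n-1)*m0) * ((n:ℝ)*x^(n-1)) := hkey
      _ ≤ c2 * R * ((n:ℝ)*x^(n-1)) :=
          mul_le_mul_of_nonneg_right (mul_le_mul_of_nonneg_left hRx hc2) (le_of_lt hD)
      _ ≤ (c1+c2) * R * ((n:ℝ)*x^(n-1)) := by
          have h0 : 0 ≤ c1 * R * ((n:ℝ)*x^(n-1)) :=
            mul_nonneg (mul_nonneg hc1 (le_of_lt hR0)) (le_of_lt hD)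
          linarith only [h0]
end
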